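/- Fix T_1 < T_2 and p_1, p_2 > 0 with p_1 + p_2 = 1, and set T_∞ = p_1 T_1 + p_2 T_2. For η > 0 let w_η be the density w associated to the rates η_1 = p_1 η and η_2 = p_2 η. Then for every continuous function φ : [T_1, T_2] → ℝ, lim_{η → 0+} ∫_{T_1}^{T_2} φ(T) w_η(T) dT = φ(T_∞). That is, the measures w_η(T) dT converge weakly to the point mass δ_{T_∞} as η → 0. -/

import Mathlib

open MeasureTheory Filter
open Set intervalIntegral

lemma aux_right (φ : ℝ → ℝ) (x b c : ℝ) (hb : 0 < b) (hc : 0 < c)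
    (hφ : ContinuousOn φ (Set.Icc x (x + b))) :
    ∫ T in x..(x + b), φ T * (T - x) ^ (c - 1)
      = (b ^ c / c) * ∫ u in (0:ℝ)..1, φ (x + b * u ^ (1 / c)) := by
  set g : ℝ → ℝ := fun u => x + b * u ^ (1 / c) with hg_def
  set g' : ℝ → ℝ := fun u => b * ((1 / c) * u ^ (1 / c - 1)) with hg'_def
  set F : ℝ → ℝ := fun T => φ T * (T - x) ^ (c - 1) with hF_def
  have h1c : (0:ℝ) < 1 / c := by positivity
  have hg0 : g 0 = x := by
    show x + b * (0:ℝ) ^ (1/c) = x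
    rw [Real.zero_rpow h1c.ne']; ring
  have hg1 : g 1 = x + b := by
    show x + b * (1:ℝ) ^ (1/c) = x + b
    rw [Real.one_rpow]; ring
  have hg_mem : ∀ u ∈ Set.Icc (0:ℝ) 1, g u ∈ Set.Icc x (x + b) := by
    intro u hu
    have h1 : 0 ≤ u ^ (1/c) := Real.rpow_nonneg hu.1 _
    have h2 : u ^ (1/c) ≤ 1 := Real.rpow_le_one hu.1 hu.2 h1c.le
    have hgu : g u = x + b * u ^ (1/c) := rfl
    constructor
    · rw [hgu]; nlinarith
    · rw [hgu]; nlinarith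
  have hg_mem_o : ∀ u ∈ Set.Ioo (0:ℝ) 1, g u ∈ Set.Ioo x (x + b) := by
    intro u hu
    have h1 : 0 < u ^ (1/c) := Real.rpow_pos_of_pos hu.1 _
    have h2 : u ^ (1/c) < 1 := Real.rpow_lt_one hu.1.le hu.2 h1c
    have hgu : g u = x + b * u ^ (1/c) := rfl
    constructor
    · rw [hgu]; nlinarith
    · rw [hgu]; nlinarith
  have hgc : ContinuousOn g (Set.uIcc (0:ℝ) 1) :=
    continuousOn_const.add (continuousOn_const.mul
      (continuousOn_id.rpow_const fun y _ => Or.inr h1c.le))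
  have hderiv : ∀ u ∈ Set.Ioo (min (0:ℝ) 1) (max (0:ℝ) 1),
      HasDerivWithinAt g (g' u) (Set.Ioi u) u := by
    intro u hu
    norm_num at hu
    have h := Real.hasDerivAt_rpow_const (x := u) (p := 1/c) (Or.inl hu.1.ne')
    exact (((h.const_mul b).const_add x)).hasDerivWithinAt
  have hFcont : ContinuousOn F (g '' Set.Ioo (min (0:ℝ) 1) (max (0:ℝ) 1)) := by
    norm_num
    have h1 : ContinuousOn F (Set.Ioo x (x + b)) := by
      apply (hφ.mono Set.Ioo_subset_Icc_self).mul
      apply ContinuousOn.rpow_const (continuousOn_id.sub continuousOn_const)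
      intro T hT
      exact Or.inl (sub_ne_zero.mpr (ne_of_gt hT.1))
    exact h1.mono (by rintro _ ⟨u, hu, rfl⟩; exact hg_mem_o u hu)
  have key : ∀ u : ℝ, 0 < u → g' u * F (g u) = (b ^ c / c) * φ (g u) := by
    intro u hu
    have harg : g u - x = b * u ^ (1/c) := by simp [hg_def]
    have h2 : (b * u ^ (1/c)) ^ (c - 1) = b ^ (c-1) * u ^ ((1/c) * (c-1)) := by
      rw [Real.mul_rpow hb.le (Real.rpow_nonneg hu.le _), Real.rpow_mul hu.le]
    have e1 : u ^ (1/c - 1) * u ^ ((1/c) * (c-1)) = 1 := by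
      rw [← Real.rpow_add hu]
      have : 1/c - 1 + 1/c * (c - 1) = 0 := by field_simp; ring
      rw [this, Real.rpow_zero]
    have e2 : b * b ^ (c-1) = b ^ c := by
      nth_rewrite 1 [← Real.rpow_one b]
      rw [← Real.rpow_add hb]; ring_nf
    simp only [hF_def, hg'_def, harg, h2]
    calc b * (1/c * u ^ (1/c - 1)) * (φ (g u) * (b ^ (c-1) * u ^ (1/c * (c-1))))
        = (b * b ^ (c-1)) * (u ^ (1/c - 1) * u ^ (1/c * (c-1))) * φ (g u) * (1/c) := by ring
      _ = (b ^ c / c) * φ (g u) := by rw [e1, e2]; ring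
  have hM := IsCompact.exists_bound_of_continuousOn isCompact_Icc hφ
  obtain ⟨M, hM⟩ := hM
  have hspike : IntegrableOn (fun T => (T - x) ^ (c-1)) (Set.Icc x (x + b)) := by
    have h0 : IntervalIntegrable (fun y : ℝ => y ^ (c-1)) volume 0 b :=
      intervalIntegrable_rpow' (by linarith)
    have h1 := h0.comp_sub_right x
    rw [zero_add] at h1
    rw [add_comm b x] at h1
    exact (intervalIntegrable_iff_integrableOn_Icc_of_le (by linarith)).mp h1
  have hFint : IntegrableOn F (Set.Icc x (x + b)) := by
    apply Integrable.bdd_mul hspike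
    · exact (hφ.aestronglyMeasurable measurableSet_Icc)
    · exact (ae_restrict_mem measurableSet_Icc).mono fun T hT => hM T hT
  have hg1' : IntegrableOn F (g '' Set.uIcc (0:ℝ) 1) := by
    apply hFint.mono_set
    rintro _ ⟨u, hu, rfl⟩
    rw [Set.uIcc_of_le (zero_le_one)] at hu
    exact hg_mem u hu
  have hψc : ContinuousOn (fun u => (b ^ c / c) * φ (g u)) (Set.Icc (0:ℝ) 1) := by
    apply continuousOn_const.mul
    apply hφ.comp (hgc.mono (by rw [Set.uIcc_of_le zero_le_one]))
    exact fun u hu => hg_mem u hu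
  have hne : ∀ᵐ u : ℝ ∂volume, u ≠ 0 := by
    rw [ae_iff]
    simp only [ne_eq, not_not, Set.setOf_eq_eq_singleton]
    exact measure_singleton 0
  have hg2 : IntegrableOn (fun u => g' u • F (g u)) (Set.uIcc (0:ℝ) 1) := by
    rw [Set.uIcc_of_le zero_le_one]
    apply (hψc.integrableOn_Icc).congr
    filter_upwards [ae_restrict_mem measurableSet_Icc, ae_restrict_of_ae hne] with u hu hu0
    have : 0 < u := lt_of_le_of_ne hu.1 (Ne.symm hu0)
    rw [smul_eq_mul, key u this]
  have hsub := integral_comp_smul_deriv''' (a := (0:ℝ)) (b := 1) hgc hderiv hFcont hg1' hg2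
  have hcongr : (∫ u in (0:ℝ)..1, g' u • F (g u))
      = ∫ u in (0:ℝ)..1, (b ^ c / c) * φ (g u) := by
    apply intervalIntegral.integral_congr_ae
    apply Filter.Eventually.of_forall
    intro u hu
    rw [Set.uIoc_of_le zero_le_one] at hu
    rw [smul_eq_mul, key u hu.1]
  rw [hg0, hg1] at hsub
  calc ∫ T in x..(x+b), φ T * (T - x) ^ (c-1) = ∫ T in x..(x+b), F T := rfl
    _ = ∫ u in (0:ℝ)..1, g' u • F (g u) := hsub.symm
    _ = ∫ u in (0:ℝ)..1, (b ^ c / c) * φ (g u) := hcongr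
    _ = (b ^ c / c) * ∫ u in (0:ℝ)..1, φ (x + b * u ^ (1/c)) := by
        rw [intervalIntegral.integral_const_mul]

lemma aux_left (φ : ℝ → ℝ) (x a c : ℝ) (ha : 0 < a) (hc : 0 < c)
    (hφ : ContinuousOn φ (Set.Icc (x - a) x)) :
    ∫ T in (x - a)..x, φ T * (x - T) ^ (c - 1)
      = (a ^ c / c) * ∫ u in (0:ℝ)..1, φ (x - a * u ^ (1 / c)) := by
  have hψ : ContinuousOn (fun S => φ (2*x - S)) (Set.Icc x (x + a)) := by
    apply hφ.comp (Continuous.continuousOn (by continuity))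
    intro S hS
    constructor <;> [skip; skip] <;> simp only [Set.mem_Icc] at hS <;> linarith [hS.1, hS.2]
  have h := aux_right (fun S => φ (2*x - S)) x a c ha hc hψ
  have h2 : (∫ T in (x - a)..x, φ T * (x - T) ^ (c - 1))
      = ∫ S in x..(x + a), φ (2*x - S) * (S - x) ^ (c - 1) := by
    have h3 := intervalIntegral.integral_comp_sub_left (a := x - a) (b := x)
      (fun S => φ (2*x - S) * (S - x) ^ (c - 1)) (2*x)
    rw [show 2*x - x = x by ring, show 2*x - (x - a) = x + a by ring] at h3
    rw [← h3]
    apply intervalIntegral.integral_congr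
    intro T _
    have e1 : 2*x - (2*x - T) = T := by ring
    have e2 : 2*x - T - x = x - T := by ring
    simp only [e1, e2]
  rw [h2, h]
  congr 1
  apply intervalIntegral.integral_congr
  intro u _
  have e : 2*x - (x + a * u ^ (1/c)) = x - a * u ^ (1/c) := by ring
  simp only [e]

/-- The temperature density `w` of Theorem 2.2 (steady state formula). -/
noncomputable def wdens (η₁ η₂ T₁ T₂ : ℝ) (T : ℝ) : ℝ :=
  if T < (η₁ * T₁ + η₂ * T₂) / (η₁ + η₂) then
    (η₁ / 2) * ((η₁ * T₁ + η₂ * T₂) / (η₁ + η₂) - T₁) ^ (-(η₁ + η₂) / 2) *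
      ((η₁ * T₁ + η₂ * T₂) / (η₁ + η₂) - T) ^ ((η₁ + η₂) / 2 - 1)
  else if T = (η₁ * T₁ + η₂ * T₂) / (η₁ + η₂) then 0
  else
    (η₂ / 2) * (T₂ - (η₁ * T₁ + η₂ * T₂) / (η₁ + η₂)) ^ (-(η₁ + η₂) / 2) *
      (T - (η₁ * T₁ + η₂ * T₂) / (η₁ + η₂)) ^ ((η₁ + η₂) / 2 - 1)

lemma ae_ne_real (a : ℝ) : ∀ᵐ x : ℝ ∂(volume : Measure ℝ), x ≠ a := by
  rw [MeasureTheory.ae_iff]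
  simp only [ne_eq, not_not, Set.setOf_eq_eq_singleton]
  exact measure_singleton a

/-- As `η → 0⁺` (with the proportions `p₁, p₂` fixed), the measures `w_η(T) dT`
converge weakly to the point mass `δ_{T∞}` with `T∞ = p₁ T₁ + p₂ T₂`. -/
theorem wdens_weak_limit_zero
    (T₁ T₂ : ℝ) (hT₁₂ : T₁ < T₂)
    (p₁ p₂ : ℝ) (hp₁ : 0 < p₁) (hp₂ : 0 < p₂) (hp : p₁ + p₂ = 1)
    (Tinf : ℝ) (hTinf : Tinf = p₁ * T₁ + p₂ * T₂)
    (φ : ℝ → ℝ) (hφ : ContinuousOn φ (Set.Icc T₁ T₂)) :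
    Tendsto (fun η : ℝ => ∫ T in T₁..T₂, φ T * wdens (p₁ * η) (p₂ * η) T₁ T₂ T)
      (nhdsWithin 0 (Set.Ioi 0)) (nhds (φ Tinf)) := by
  have hda : Tinf - T₁ = p₂ * (T₂ - T₁) := by rw [hTinf]; linear_combination T₁ * hp
  have hdb : T₂ - Tinf = p₁ * (T₂ - T₁) := by rw [hTinf]; linear_combination (-T₂) * hp
  have hT1 : T₁ < Tinf := by nlinarith [mul_pos hp₂ (sub_pos.mpr hT₁₂)]
  have hT2 : Tinf < T₂ := by nlinarith [mul_pos hp₁ (sub_pos.mpr hT₁₂)]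
  have ha : 0 < Tinf - T₁ := sub_pos.mpr hT1
  have hb : 0 < T₂ - Tinf := sub_pos.mpr hT2
  obtain ⟨M, hM⟩ := isCompact_Icc.exists_bound_of_continuousOn hφ
  have hmemL : ∀ η : ℝ, 0 < η → ∀ u ∈ Set.Icc (0:ℝ) 1,
      Tinf - (Tinf - T₁) * u ^ (2/η) ∈ Set.Icc T₁ T₂ := by
    intro η hη u hu
    have h1 : 0 ≤ u ^ (2/η) := Real.rpow_nonneg hu.1 _
    have h2 : u ^ (2/η) ≤ 1 := Real.rpow_le_one hu.1 hu.2 (by positivity)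
    constructor <;> nlinarith
  have hmemR : ∀ η : ℝ, 0 < η → ∀ u ∈ Set.Icc (0:ℝ) 1,
      Tinf + (T₂ - Tinf) * u ^ (2/η) ∈ Set.Icc T₁ T₂ := by
    intro η hη u hu
    have h1 : 0 ≤ u ^ (2/η) := Real.rpow_nonneg hu.1 _
    have h2 : u ^ (2/η) ≤ 1 := Real.rpow_le_one hu.1 hu.2 (by positivity)
    constructor <;> nlinarith
  -- Step A : the eventual identity.
  have key : ∀ η ∈ Set.Ioi (0:ℝ),
      (∫ T in T₁..T₂, φ T * wdens (p₁*η) (p₂*η) T₁ T₂ T)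
        = p₁ * (∫ u in (0:ℝ)..1, φ (Tinf - (Tinf - T₁) * u ^ (2/η)))
          + p₂ * (∫ u in (0:ℝ)..1, φ (Tinf + (T₂ - Tinf) * u ^ (2/η))) := by
    intro η hη
    rw [Set.mem_Ioi] at hη
    have hc : 0 < η/2 := by positivity
    have h2η : 1/(η/2) = 2/η := by rw [one_div_div]
    have hsum : p₁*η + p₂*η = η := by rw [← add_mul, hp, one_mul]
    have hmean : (p₁*η*T₁ + p₂*η*T₂)/η = Tinf := by
      rw [hTinf]; field_simp
    have hw : ∀ T, wdens (p₁*η) (p₂*η) T₁ T₂ T =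
        if T < Tinf then
          ((p₁*η/2) * (Tinf - T₁) ^ (-(η/2))) * (Tinf - T) ^ (η/2 - 1)
        else if T = Tinf then 0
        else ((p₂*η/2) * (T₂ - Tinf) ^ (-(η/2))) * (T - Tinf) ^ (η/2 - 1) := by
      intro T
      simp only [wdens, hsum, hmean, neg_div]
    have hsubL : Set.uIoc T₁ Tinf ⊆ Set.Icc T₁ T₂ := by
      rw [Set.uIoc_of_le hT1.le]
      exact fun z hz => ⟨hz.1.le, hz.2.trans hT2.le⟩
    have hsubR : Set.uIoc Tinf T₂ ⊆ Set.Icc T₁ T₂ := by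
      rw [Set.uIoc_of_le hT2.le]
      exact fun z hz => ⟨hT1.le.trans hz.1.le, hz.2⟩
    have spikeL : IntervalIntegrable
        (fun T => ((p₁*η/2) * (Tinf - T₁) ^ (-(η/2))) * (Tinf - T) ^ (η/2 - 1))
        volume T₁ Tinf := by
      have h0 : IntervalIntegrable (fun y : ℝ => y ^ (η/2 - 1)) volume 0 (Tinf - T₁) :=
        intervalIntegrable_rpow' (by linarith)
      have h1 := h0.comp_sub_left Tinf
      rw [sub_zero, show Tinf - (Tinf - T₁) = T₁ by ring] at h1
      exact h1.symm.const_mul _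
    have spikeR : IntervalIntegrable
        (fun T => ((p₂*η/2) * (T₂ - Tinf) ^ (-(η/2))) * (T - Tinf) ^ (η/2 - 1))
        volume Tinf T₂ := by
      have h0 : IntervalIntegrable (fun y : ℝ => y ^ (η/2 - 1)) volume 0 (T₂ - Tinf) :=
        intervalIntegrable_rpow' (by linarith)
      have h1 := h0.comp_sub_right Tinf
      rw [zero_add, show T₂ - Tinf + Tinf = T₂ by ring] at h1
      exact h1.const_mul _
    have intL : IntervalIntegrable (fun T => φ T * wdens (p₁*η) (p₂*η) T₁ T₂ T)
        volume T₁ Tinf := by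
      rw [intervalIntegrable_iff]
      have base : IntegrableOn
          (fun T => φ T * (((p₁*η/2) * (Tinf - T₁) ^ (-(η/2))) * (Tinf - T) ^ (η/2 - 1)))
          (Set.uIoc T₁ Tinf) := by
        apply Integrable.bdd_mul (intervalIntegrable_iff.mp spikeL)
        · exact (hφ.mono hsubL).aestronglyMeasurable measurableSet_uIoc
        · filter_upwards [ae_restrict_mem measurableSet_uIoc] with T hT
          exact hM T (hsubL hT)
      apply base.congr
      filter_upwards [ae_restrict_mem measurableSet_uIoc,
        ae_restrict_of_ae (ae_ne_real Tinf)] with T hT hT'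
      rw [Set.uIoc_of_le hT1.le] at hT
      have hlt : T < Tinf := lt_of_le_of_ne hT.2 hT'
      rw [hw T, if_pos hlt]
    have intR : IntervalIntegrable (fun T => φ T * wdens (p₁*η) (p₂*η) T₁ T₂ T)
        volume Tinf T₂ := by
      rw [intervalIntegrable_iff]
      have base : IntegrableOn
          (fun T => φ T * (((p₂*η/2) * (T₂ - Tinf) ^ (-(η/2))) * (T - Tinf) ^ (η/2 - 1)))
          (Set.uIoc Tinf T₂) := by
        apply Integrable.bdd_mul (intervalIntegrable_iff.mp spikeR)
        · exact (hφ.mono hsubR).aestronglyMeasurable measurableSet_uIoc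
        · filter_upwards [ae_restrict_mem measurableSet_uIoc] with T hT
          exact hM T (hsubR hT)
      apply base.congr
      filter_upwards [ae_restrict_mem measurableSet_uIoc] with T hT
      rw [Set.uIoc_of_le hT2.le] at hT
      rw [hw T, if_neg (not_lt.mpr hT.1.le), if_neg (ne_of_gt hT.1)]
    have hsplit := intervalIntegral.integral_add_adjacent_intervals intL intR
    -- the left piece
    have hLpiece : (∫ T in T₁..Tinf, φ T * wdens (p₁*η) (p₂*η) T₁ T₂ T)
        = p₁ * ∫ u in (0:ℝ)..1, φ (Tinf - (Tinf - T₁) * u ^ (2/η)) := by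
      have step1 : (∫ T in T₁..Tinf, φ T * wdens (p₁*η) (p₂*η) T₁ T₂ T)
          = ∫ T in T₁..Tinf,
              ((p₁*η/2) * (Tinf - T₁) ^ (-(η/2))) * (φ T * (Tinf - T) ^ (η/2 - 1)) := by
        apply intervalIntegral.integral_congr_ae
        filter_upwards [ae_ne_real Tinf] with T hT' hT
        rw [Set.uIoc_of_le hT1.le] at hT
        have hlt : T < Tinf := lt_of_le_of_ne hT.2 hT'
        rw [hw T, if_pos hlt]; ring
      rw [step1, intervalIntegral.integral_const_mul]
      have hφL' : ContinuousOn φ (Set.Icc (Tinf - (Tinf - T₁)) Tinf) := by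
        rw [show Tinf - (Tinf - T₁) = T₁ by ring]
        exact hφ.mono (Set.Icc_subset_Icc le_rfl hT2.le)
      have haux := aux_left φ Tinf (Tinf - T₁) (η/2) ha hc hφL'
      rw [show Tinf - (Tinf - T₁) = T₁ by ring, h2η] at haux
      rw [haux]
      have hpow : (Tinf - T₁) ^ (-(η/2)) * (Tinf - T₁) ^ (η/2) = 1 := by
        rw [← Real.rpow_add ha]; norm_num
      have hK : ((p₁*η/2) * (Tinf - T₁) ^ (-(η/2))) * ((Tinf - T₁) ^ (η/2) / (η/2)) = p₁ := by
        calc ((p₁*η/2) * (Tinf - T₁) ^ (-(η/2))) * ((Tinf - T₁) ^ (η/2) / (η/2))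
            = p₁ * ((Tinf - T₁) ^ (-(η/2)) * (Tinf - T₁) ^ (η/2)) * ((η/2) / (η/2)) := by
              ring
          _ = p₁ := by rw [hpow, div_self hc.ne']; ring
      rw [← mul_assoc, hK]
    -- the right piece
    have hRpiece : (∫ T in Tinf..T₂, φ T * wdens (p₁*η) (p₂*η) T₁ T₂ T)
        = p₂ * ∫ u in (0:ℝ)..1, φ (Tinf + (T₂ - Tinf) * u ^ (2/η)) := by
      have step1 : (∫ T in Tinf..T₂, φ T * wdens (p₁*η) (p₂*η) T₁ T₂ T)
          = ∫ T in Tinf..T₂,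
              ((p₂*η/2) * (T₂ - Tinf) ^ (-(η/2))) * (φ T * (T - Tinf) ^ (η/2 - 1)) := by
        apply intervalIntegral.integral_congr_ae
        apply Filter.Eventually.of_forall
        intro T hT
        rw [Set.uIoc_of_le hT2.le] at hT
        rw [hw T, if_neg (not_lt.mpr hT.1.le), if_neg (ne_of_gt hT.1)]; ring
      rw [step1, intervalIntegral.integral_const_mul]
      have hφR' : ContinuousOn φ (Set.Icc Tinf (Tinf + (T₂ - Tinf))) := by
        rw [show Tinf + (T₂ - Tinf) = T₂ by ring]
        exact hφ.mono (Set.Icc_subset_Icc hT1.le le_rfl)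
      have haux := aux_right φ Tinf (T₂ - Tinf) (η/2) hb hc hφR'
      rw [show Tinf + (T₂ - Tinf) = T₂ by ring, h2η] at haux
      rw [haux]
      have hpow : (T₂ - Tinf) ^ (-(η/2)) * (T₂ - Tinf) ^ (η/2) = 1 := by
        rw [← Real.rpow_add hb]; norm_num
      have hK : ((p₂*η/2) * (T₂ - Tinf) ^ (-(η/2))) * ((T₂ - Tinf) ^ (η/2) / (η/2)) = p₂ := by
        calc ((p₂*η/2) * (T₂ - Tinf) ^ (-(η/2))) * ((T₂ - Tinf) ^ (η/2) / (η/2))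
            = p₂ * ((T₂ - Tinf) ^ (-(η/2)) * (T₂ - Tinf) ^ (η/2)) * ((η/2) / (η/2)) := by
              ring
          _ = p₂ := by rw [hpow, div_self hc.ne']; ring
      rw [← mul_assoc, hK]
    rw [← hsplit, hLpiece, hRpiece]
  -- Step B : the limit.
  have tendL : Tendsto (fun η : ℝ => ∫ u in (0:ℝ)..1, φ (Tinf - (Tinf - T₁) * u ^ (2/η)))
      (nhdsWithin 0 (Set.Ioi 0)) (nhds (φ Tinf)) := by
    have hconst : (∫ _u in (0:ℝ)..1, φ Tinf) = φ Tinf := by simp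
    rw [← hconst]
    apply intervalIntegral.tendsto_integral_filter_of_dominated_convergence
      (bound := fun _ => M)
    · filter_upwards [self_mem_nhdsWithin] with η hη
      rw [Set.mem_Ioi] at hη
      have hcont : ContinuousOn (fun u : ℝ => φ (Tinf - (Tinf - T₁) * u ^ (2/η)))
          (Set.Icc 0 1) := by
        apply hφ.comp
        · exact continuousOn_const.sub (continuousOn_const.mul
            (continuousOn_id.rpow_const fun y _ => Or.inr (by positivity)))
        · intro u hu; exact hmemL η hη u hu
      have hsub : Set.uIoc (0:ℝ) 1 ⊆ Set.Icc (0:ℝ) 1 := by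
        rw [Set.uIoc_of_le zero_le_one]; exact Set.Ioc_subset_Icc_self
      exact (hcont.mono hsub).aestronglyMeasurable measurableSet_uIoc
    · filter_upwards [self_mem_nhdsWithin] with η hη
      rw [Set.mem_Ioi] at hη
      apply Filter.Eventually.of_forall
      intro u hu
      rw [Set.uIoc_of_le zero_le_one] at hu
      exact hM _ (hmemL η hη u ⟨hu.1.le, hu.2⟩)
    · exact intervalIntegrable_const
    · filter_upwards [ae_ne_real (1:ℝ)] with u hu1 hu
      rw [Set.uIoc_of_le zero_le_one] at hu
      have huo : u ∈ Set.Ioo (0:ℝ) 1 := ⟨hu.1, lt_of_le_of_ne hu.2 hu1⟩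
      have h1 : Tendsto (fun η : ℝ => u ^ (2/η)) (nhdsWithin 0 (Set.Ioi 0)) (nhds 0) := by
        have hlog : Real.log u < 0 := Real.log_neg huo.1 huo.2
        have h2 : Tendsto (fun η : ℝ => 2/η) (nhdsWithin 0 (Set.Ioi 0)) atTop := by
          have h := tendsto_inv_nhdsGT_zero (𝕜 := ℝ)
          have := h.const_mul_atTop (show (0:ℝ) < 2 by norm_num)
          simpa [div_eq_mul_inv] using this
        have h3 : Tendsto (fun η : ℝ => (2/η) * Real.log u)
            (nhdsWithin 0 (Set.Ioi 0)) atBot := h2.atTop_mul_const_of_neg hlog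
        have h4 := Real.tendsto_exp_atBot.comp h3
        have heq : (fun η : ℝ => u ^ (2/η))
            = fun η : ℝ => Real.exp ((2/η) * Real.log u) := by
          funext η
          rw [Real.rpow_def_of_pos huo.1, mul_comm]
        rw [heq]
        exact h4
      have h5 : Tendsto (fun η : ℝ => Tinf - (Tinf - T₁) * u ^ (2/η))
          (nhdsWithin 0 (Set.Ioi 0)) (nhds Tinf) := by
        have h' : Tendsto (fun η : ℝ => Tinf - (Tinf - T₁) * u ^ (2/η))
            (nhdsWithin 0 (Set.Ioi 0)) (nhds (Tinf - (Tinf - T₁) * 0)) :=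
          tendsto_const_nhds.sub (tendsto_const_nhds.mul h1)
        simpa using h'
      have h6 : Tendsto (fun η : ℝ => Tinf - (Tinf - T₁) * u ^ (2/η))
          (nhdsWithin 0 (Set.Ioi 0)) (nhdsWithin Tinf (Set.Icc T₁ T₂)) := by
        apply tendsto_nhdsWithin_of_tendsto_nhds_of_eventually_within _ h5
        filter_upwards [self_mem_nhdsWithin] with η hη
        rw [Set.mem_Ioi] at hη
        exact hmemL η hη u ⟨huo.1.le, huo.2.le⟩
      exact ((hφ Tinf ⟨hT1.le, hT2.le⟩).tendsto).comp h6
  have tendR : Tendsto (fun η : ℝ => ∫ u in (0:ℝ)..1, φ (Tinf + (T₂ - Tinf) * u ^ (2/η)))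
      (nhdsWithin 0 (Set.Ioi 0)) (nhds (φ Tinf)) := by
    have hconst : (∫ _u in (0:ℝ)..1, φ Tinf) = φ Tinf := by simp
    rw [← hconst]
    apply intervalIntegral.tendsto_integral_filter_of_dominated_convergence
      (bound := fun _ => M)
    · filter_upwards [self_mem_nhdsWithin] with η hη
      rw [Set.mem_Ioi] at hη
      have hcont : ContinuousOn (fun u : ℝ => φ (Tinf + (T₂ - Tinf) * u ^ (2/η)))
          (Set.Icc 0 1) := by
        apply hφ.comp
        · exact continuousOn_const.add (continuousOn_const.mul
            (continuousOn_id.rpow_const fun y _ => Or.inr (by positivity)))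
        · intro u hu; exact hmemR η hη u hu
      have hsub : Set.uIoc (0:ℝ) 1 ⊆ Set.Icc (0:ℝ) 1 := by
        rw [Set.uIoc_of_le zero_le_one]; exact Set.Ioc_subset_Icc_self
      exact (hcont.mono hsub).aestronglyMeasurable measurableSet_uIoc
    · filter_upwards [self_mem_nhdsWithin] with η hη
      rw [Set.mem_Ioi] at hη
      apply Filter.Eventually.of_forall
      intro u hu
      rw [Set.uIoc_of_le zero_le_one] at hu
      exact hM _ (hmemR η hη u ⟨hu.1.le, hu.2⟩)
    · exact intervalIntegrable_const
    · filter_upwards [ae_ne_real (1:ℝ)] with u hu1 hu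
      rw [Set.uIoc_of_le zero_le_one] at hu
      have huo : u ∈ Set.Ioo (0:ℝ) 1 := ⟨hu.1, lt_of_le_of_ne hu.2 hu1⟩
      have h1 : Tendsto (fun η : ℝ => u ^ (2/η)) (nhdsWithin 0 (Set.Ioi 0)) (nhds 0) := by
        have hlog : Real.log u < 0 := Real.log_neg huo.1 huo.2
        have h2 : Tendsto (fun η : ℝ => 2/η) (nhdsWithin 0 (Set.Ioi 0)) atTop := by
          have h := tendsto_inv_nhdsGT_zero (𝕜 := ℝ)
          have := h.const_mul_atTop (show (0:ℝ) < 2 by norm_num)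
          simpa [div_eq_mul_inv] using this
        have h3 : Tendsto (fun η : ℝ => (2/η) * Real.log u)
            (nhdsWithin 0 (Set.Ioi 0)) atBot := h2.atTop_mul_const_of_neg hlog
        have h4 := Real.tendsto_exp_atBot.comp h3
        have heq : (fun η : ℝ => u ^ (2/η))
            = fun η : ℝ => Real.exp ((2/η) * Real.log u) := by
          funext η
          rw [Real.rpow_def_of_pos huo.1, mul_comm]
        rw [heq]
        exact h4
      have h5 : Tendsto (fun η : ℝ => Tinf + (T₂ - Tinf) * u ^ (2/η))
          (nhdsWithin 0 (Set.Ioi 0)) (nhds Tinf) := by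
        have h' : Tendsto (fun η : ℝ => Tinf + (T₂ - Tinf) * u ^ (2/η))
            (nhdsWithin 0 (Set.Ioi 0)) (nhds (Tinf + (T₂ - Tinf) * 0)) :=
          tendsto_const_nhds.add (tendsto_const_nhds.mul h1)
        simpa using h'
      have h6 : Tendsto (fun η : ℝ => Tinf + (T₂ - Tinf) * u ^ (2/η))
          (nhdsWithin 0 (Set.Ioi 0)) (nhdsWithin Tinf (Set.Icc T₁ T₂)) := by
        apply tendsto_nhdsWithin_of_tendsto_nhds_of_eventually_within _ h5
        filter_upwards [self_mem_nhdsWithin] with η hη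
        rw [Set.mem_Ioi] at hη
        exact hmemR η hη u ⟨huo.1.le, huo.2.le⟩
      exact ((hφ Tinf ⟨hT1.le, hT2.le⟩).tendsto).comp h6
  have hcomb := (tendL.const_mul p₁).add (tendR.const_mul p₂)
  have hval : p₁ * φ Tinf + p₂ * φ Tinf = φ Tinf := by rw [← add_mul, hp, one_mul]
  rw [hval] at hcomb
  apply hcomb.congr'
  filter_upwards [self_mem_nhdsWithin] with η hη
  exact (key η hη).symm
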